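/- Let R > 0, let z be a point of the Euclidean plane ℝ² with v = ‖z‖ > 0, and let g : ℝ → ℝ≥0 be measurable. Then ∫_{b(z,R)} g(‖x‖) dx = ∫₀^{max(R−v,0)} 2π u·g(u) du + ∫_{|R−v|}^{R+v} 2u·arccos((u² + v² − R²)/(2 u v))·g(u) du. Equivalently, the distance from the origin of a point uniformly distributed on the disc b(z,R) has density χ⁽¹⁾(u,v) = 2u/R² on 0 ≤ u ≤ R−v (when v ≤ R) and χ⁽²⁾(u,v) = (2u/(πR²))·arccos((u²+v²−R²)/(2uv)) on |R−v| < u ≤ R+v. -/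

import Mathlib

open MeasureTheory Real Set

/-- lintegral version of `integral_comp_polarCoord_symm`. -/
theorem lintegral_comp_polarCoord_symm' (f : ℝ × ℝ → ENNReal) :
    ∫⁻ p in polarCoord.target, ENNReal.ofReal p.1 * f (polarCoord.symm p) = ∫⁻ p, f p := by
  set B : ℝ × ℝ → ℝ × ℝ →L[ℝ] ℝ × ℝ := fun p =>
    LinearMap.toContinuousLinearMap (Matrix.toLin (Module.Basis.finTwoProd ℝ) (Module.Basis.finTwoProd ℝ)
      !![Real.cos p.2, -p.1 * Real.sin p.2; Real.sin p.2, p.1 * Real.cos p.2]) with hB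
  have A : ∀ p ∈ polarCoord.target, HasFDerivWithinAt polarCoord.symm (B p) polarCoord.target p :=
    fun p _ => (hasFDerivAt_polarCoord_symm p).hasFDerivWithinAt
  have B_det : ∀ p, (B p).det = p.1 := by
    intro p
    conv_rhs => rw [← one_mul p.1, ← cos_sq_add_sin_sq p.2]
    simp only [hB, neg_mul, LinearMap.det_toContinuousLinearMap, LinearMap.det_toLin,
      Matrix.det_fin_two_of, sub_neg_eq_add]
    ring
  symm
  calc
    ∫⁻ p, f p = ∫⁻ p in polarCoord.source, f p := by
      rw [← setLIntegral_univ]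
      exact setLIntegral_congr polarCoord_source_ae_eq_univ.symm
    _ = ∫⁻ p in polarCoord.symm '' polarCoord.target, f p := by
      rw [OpenPartialHomeomorph.symm_image_target_eq_source]
    _ = ∫⁻ p in polarCoord.target, ENNReal.ofReal |(B p).det| * f (polarCoord.symm p) :=
      lintegral_image_eq_lintegral_abs_det_fderiv_mul volume
        polarCoord.open_target.measurableSet A polarCoord.symm.injOn f
    _ = _ := by
      refine setLIntegral_congr_fun_ae polarCoord.open_target.measurableSet
        (Filter.Eventually.of_forall fun p hp => ?_)
      rw [B_det, abs_of_pos hp.1]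

theorem Complex.lintegral_comp_polarCoord_symm' (f : ℂ → ENNReal) :
    ∫⁻ p in polarCoord.target, ENNReal.ofReal p.1 * f (Complex.polarCoord.symm p) = ∫⁻ p, f p := by
  rw [← (Complex.volume_preserving_equiv_real_prod.symm).lintegral_comp_emb
    Complex.measurableEquivRealProd.symm.measurableEmbedding, ← _root_.lintegral_comp_polarCoord_symm' (fun p => f (Complex.measurableEquivRealProd.symm p))]
  rfl

theorem arccos_anti {x y : ℝ} (h : x ≤ y) : Real.arccos y ≤ Real.arccos x := by
  simp only [Real.arccos]
  have := Real.monotone_arcsin h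
  linarith

theorem cos_arccos_ge {c : ℝ} (hc : c ≤ 1) : c ≤ Real.cos (Real.arccos c) := by
  rcases le_or_gt (-1) c with h | h
  · rw [Real.cos_arccos h hc]
  · calc c ≤ -1 := h.le
      _ ≤ Real.cos (Real.arccos c) := Real.neg_one_le_cos _

theorem angular_measure (c : ℝ) :
    volume (Set.Ioo (-π) π ∩ {θ : ℝ | c ≤ Real.cos θ}) = ENNReal.ofReal (2 * Real.arccos c) := by
  rcases lt_or_ge 1 c with hc | hc
  · have h1 : Set.Ioo (-π) π ∩ {θ : ℝ | c ≤ Real.cos θ} = ∅ := by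
      ext θ
      simp only [Set.mem_inter_iff, Set.mem_setOf_eq, Set.mem_empty_iff_false, iff_false,
        not_and]
      intro _
      exact not_le.2 (lt_of_le_of_lt (Real.cos_le_one θ) hc)
    rw [h1, Real.arccos_eq_zero.2 hc.le]
    simp
  · set a := Real.arccos c with ha
    have ha0 : 0 ≤ a := Real.arccos_nonneg c
    have hapi : a ≤ π := Real.arccos_le_pi c
    have hsub1 : Set.Ioo (-a) a ⊆ Set.Ioo (-π) π ∩ {θ : ℝ | c ≤ Real.cos θ} := by
      intro θ hθ
      have habs : |θ| < a := abs_lt.2 ⟨hθ.1, hθ.2⟩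
      refine ⟨⟨lt_of_le_of_lt (neg_le_neg hapi) hθ.1, lt_of_lt_of_le hθ.2 hapi⟩, ?_⟩
      have : Real.cos a ≤ Real.cos |θ| :=
        Real.cos_le_cos_of_nonneg_of_le_pi (abs_nonneg θ) hapi habs.le
      have h2 : c ≤ Real.cos a := cos_arccos_ge hc
      simp only [Set.mem_setOf_eq]
      calc c ≤ Real.cos |θ| := le_trans h2 this
        _ = Real.cos θ := Real.cos_abs θ
    have hsub2 : Set.Ioo (-π) π ∩ {θ : ℝ | c ≤ Real.cos θ} ⊆ Set.Icc (-a) a := by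
      rintro θ ⟨hθ1, hθ2⟩
      have habs : |θ| ≤ π := le_of_lt (abs_lt.2 ⟨hθ1.1, hθ1.2⟩)
      have : Real.arccos (Real.cos θ) ≤ a := arccos_anti hθ2
      rw [← Real.cos_abs θ, Real.arccos_cos (abs_nonneg θ) habs] at this
      exact abs_le.1 this
    refine le_antisymm ?_ ?_
    · calc volume (Set.Ioo (-π) π ∩ {θ : ℝ | c ≤ Real.cos θ})
          ≤ volume (Set.Icc (-a) a) := measure_mono hsub2
        _ = ENNReal.ofReal (2 * a) := by rw [Real.volume_Icc]; ring_nf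
    · calc ENNReal.ofReal (2 * a) = volume (Set.Ioo (-a) a) := by rw [Real.volume_Ioo]; ring_nf
        _ ≤ _ := measure_mono hsub1

theorem key_complex (R : ℝ) (hR : 0 < R) (v : ℝ) (hv0 : 0 < v) (g : ℝ → NNReal)
    (hg : Measurable g) :
    (∫⁻ x in Metric.closedBall (v : ℂ) R, (g ‖x‖ : ENNReal)) =
      (∫⁻ u in Set.Ioo (0:ℝ) (max (R - v) 0),
          ENNReal.ofReal (2 * π * u) * (g u : ENNReal)) +
      ∫⁻ u in Set.Ioo |R - v| (R + v),
          ENNReal.ofReal (2 * u * Real.arccos ((u ^ 2 + v ^ 2 - R ^ 2) / (2 * u * v))) *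
            (g u : ENNReal) := by
  set h : ℝ → ℝ := fun r => (r ^ 2 + v ^ 2 - R ^ 2) / (2 * r * v) with hh
  set H : ℝ → ENNReal := fun r => ENNReal.ofReal (2 * r * Real.arccos (h r)) * (g r : ENNReal)
    with hHdef
  have hmeas_h : Measurable h := by
    apply Measurable.div <;> fun_prop
  set D : Set (ℝ × ℝ) := {p | h p.1 ≤ Real.cos p.2} with hD
  have hDmeas : MeasurableSet D :=
    measurableSet_le (hmeas_h.comp measurable_fst) (Real.measurable_cos.comp measurable_snd)
  have hFmeas : Measurable fun p : ℝ × ℝ =>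
      ENNReal.ofReal p.1 * D.indicator (fun q => (g q.1 : ENNReal)) p :=
    (ENNReal.measurable_ofReal.comp measurable_fst).mul
      (Measurable.indicator (measurable_coe_nnreal_ennreal.comp (hg.comp measurable_fst)) hDmeas)
  -- Step 1 : polar coordinates
  have step1 : (∫⁻ x in Metric.closedBall (v : ℂ) R, (g ‖x‖ : ENNReal))
      = ∫⁻ p in polarCoord.target,
          ENNReal.ofReal p.1 * D.indicator (fun q => (g q.1 : ENNReal)) p := by
    rw [← lintegral_indicator (Metric.isClosed_closedBall.measurableSet) (fun x => (g ‖x‖ : ENNReal)),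
      ← Complex.lintegral_comp_polarCoord_symm'
        ((Metric.closedBall (v:ℂ) R).indicator fun x => (g ‖x‖ : ENNReal))]
    refine setLIntegral_congr_fun_ae polarCoord.open_target.measurableSet
      (Filter.Eventually.of_forall fun p hp => ?_)
    have hr : 0 < p.1 := hp.1
    congr 1
    have hnorm : ‖Complex.polarCoord.symm p‖ = p.1 := by
      rw [Complex.norm_polarCoord_symm, abs_of_pos hr]
    have hmem : Complex.polarCoord.symm p ∈ Metric.closedBall (v:ℂ) R ↔ p ∈ D := by
      rw [Metric.mem_closedBall, Complex.dist_eq]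
      have habs2 : ‖Complex.polarCoord.symm p - (v:ℂ)‖ ^ 2
          = p.1 ^ 2 - 2 * p.1 * v * Real.cos p.2 + v ^ 2 := by
        rw [Complex.sq_norm, Complex.normSq_apply]
        simp only [Complex.polarCoord_symm_apply, Complex.sub_re, Complex.sub_im,
          Complex.add_re, Complex.add_im, Complex.mul_re, Complex.mul_im, Complex.ofReal_re,
          Complex.ofReal_im, Complex.I_re, Complex.I_im]
        nlinarith [Real.sin_sq_add_cos_sq p.2]
      have hiff : ‖Complex.polarCoord.symm p - (v:ℂ)‖ ≤ R ↔
          ‖Complex.polarCoord.symm p - (v:ℂ)‖ ^ 2 ≤ R ^ 2 := by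
        constructor
        · intro hle; nlinarith [norm_nonneg (Complex.polarCoord.symm p - (v:ℂ))]
        · intro hle; nlinarith [norm_nonneg (Complex.polarCoord.symm p - (v:ℂ))]
      rw [hiff, habs2, hD]
      simp only [Set.mem_setOf_eq, hh]
      rw [div_le_iff₀ (by positivity)]
      constructor <;> intro <;> nlinarith
    by_cases hp' : p ∈ D
    · rw [Set.indicator_of_mem (hmem.2 hp'), Set.indicator_of_mem hp', hnorm]
    · rw [Set.indicator_of_notMem (fun hx => hp' (hmem.1 hx)), Set.indicator_of_notMem hp']
  -- Step 2 : Tonelli and the angular measure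
  have step2 : (∫⁻ p in polarCoord.target,
        ENNReal.ofReal p.1 * D.indicator (fun q => (g q.1 : ENNReal)) p)
      = ∫⁻ r in Set.Ioi (0:ℝ), H r := by
    have htarget : polarCoord.target = Set.Ioi (0:ℝ) ×ˢ Set.Ioo (-π) π := rfl
    have hrestrict : (volume : Measure (ℝ × ℝ)).restrict (Set.Ioi (0:ℝ) ×ˢ Set.Ioo (-π) π)
        = (volume.restrict (Set.Ioi (0:ℝ))).prod (volume.restrict (Set.Ioo (-π) π)) := by
      rw [MeasureTheory.Measure.volume_eq_prod, ← Measure.prod_restrict]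
    rw [htarget, hrestrict, lintegral_prod _ hFmeas.aemeasurable]
    refine setLIntegral_congr_fun_ae measurableSet_Ioi
      (Filter.Eventually.of_forall fun r hr => ?_)
    have hr0 : (0:ℝ) < r := hr
    have hset : MeasurableSet {θ : ℝ | h r ≤ Real.cos θ} :=
      measurableSet_le measurable_const Real.measurable_cos
    calc ∫⁻ θ in Set.Ioo (-π) π,
          ENNReal.ofReal (r, θ).1 * D.indicator (fun q => (g q.1 : ENNReal)) (r, θ)
        = ∫⁻ θ in Set.Ioo (-π) π,
            ENNReal.ofReal r * ({θ : ℝ | h r ≤ Real.cos θ}).indicator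
              (fun _ => (g r : ENNReal)) θ := by
          refine setLIntegral_congr_fun_ae measurableSet_Ioo
            (Filter.Eventually.of_forall fun θ _ => ?_)
          by_cases hθ : h r ≤ Real.cos θ
          · rw [Set.indicator_of_mem (show (r, θ) ∈ D from hθ), Set.indicator_of_mem (show θ ∈ {θ : ℝ | h r ≤ Real.cos θ} from hθ)]
          · rw [Set.indicator_of_notMem (show (r, θ) ∉ D from hθ),
              Set.indicator_of_notMem (show θ ∉ {θ : ℝ | h r ≤ Real.cos θ} from hθ)]
      _ = ENNReal.ofReal r * ((g r : ENNReal) *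
            volume (Set.Ioo (-π) π ∩ {θ : ℝ | h r ≤ Real.cos θ})) := by
          rw [lintegral_const_mul _ (Measurable.indicator measurable_const hset),
            lintegral_indicator hset, Measure.restrict_restrict hset, setLIntegral_const,
            Set.inter_comm]
      _ = H r := by
          rw [angular_measure (h r)]
          show _ = ENNReal.ofReal (2 * r * Real.arccos (h r)) * (g r : ENNReal)
          rw [show (2:ℝ) * r * Real.arccos (h r) = r * (2 * Real.arccos (h r)) by ring,
            ENNReal.ofReal_mul hr0.le]
          ring
  -- Step 3 : split the half-line
  have hAlt : |R - v| < R + v := abs_lt.2 ⟨by linarith, by linarith⟩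
  have hmA : max (R - v) 0 ≤ |R - v| := max_le (le_abs_self _) (abs_nonneg _)
  have hdisj : Disjoint (Set.Ioo (0:ℝ) (max (R - v) 0)) (Set.Ioo |R - v| (R + v)) := by
    rw [Set.disjoint_left]
    intro r h1 h2
    have := h1.2; have := h2.1
    linarith
  have step3 : (∫⁻ r in Set.Ioi (0:ℝ), H r)
      = (∫⁻ r in Set.Ioo (0:ℝ) (max (R - v) 0), H r)
        + ∫⁻ r in Set.Ioo |R - v| (R + v), H r := by
    rw [← lintegral_union measurableSet_Ioo hdisj,
      ← lintegral_indicator measurableSet_Ioi H,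
      ← lintegral_indicator (measurableSet_Ioo.union measurableSet_Ioo) H]
    refine lintegral_congr_ae ?_
    filter_upwards [compl_mem_ae_iff.2 (volume_singleton (a := R - v))] with r hrne
    have hrne' : r ≠ R - v := hrne
    by_cases h0 : r ∈ Set.Ioi (0:ℝ)
    · rw [Set.indicator_of_mem h0]
      by_cases h12 : r ∈ Set.Ioo (0:ℝ) (max (R - v) 0) ∪ Set.Ioo |R - v| (R + v)
      · rw [Set.indicator_of_mem h12]
      · rw [Set.indicator_of_notMem h12]
        have hr0 : (0:ℝ) < r := h0
        rw [Set.mem_union, not_or, Set.mem_Ioo, Set.mem_Ioo, not_and_or, not_and_or] at h12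
        have hkey : R ≤ |r - v| := by
          rcases h12.2 with h2 | h2
          · -- r ≤ |R - v|
            push_neg at h2
            rcases le_or_gt R v with hRv | hRv
            · rw [abs_of_nonpos (by linarith [abs_of_nonpos (show R - v ≤ 0 by linarith) ▸ h2] :
                r - v ≤ 0)]
              rw [abs_of_nonpos (show R - v ≤ 0 by linarith)] at h2
              linarith
            · exfalso
              rw [abs_of_nonneg (by linarith)] at h2
              rcases h12.1 with h1 | h1
              · exact h1 hr0
              · push_neg at h1
                rw [max_eq_left (by linarith)] at h1
                exact hrne' (le_antisymm h2 h1)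
          · push_neg at h2
            rw [abs_of_nonneg (by linarith)]
            linarith
        have harc : Real.arccos (h r) = 0 := by
          rw [Real.arccos_eq_zero, hh]
          rw [le_div_iff₀ (by positivity)]
          rcases abs_cases (r - v) with ⟨he, _⟩ | ⟨he, _⟩ <;> rw [he] at hkey <;> nlinarith
        rw [hHdef]
        simp [harc]
    · rw [Set.indicator_of_notMem h0, Set.indicator_of_notMem]
      rintro (hmem | hmem)
      · exact h0 hmem.1
      · exact h0 (Set.mem_Ioi.2 (lt_of_le_of_lt (abs_nonneg _) hmem.1))
  -- Step 4 : identify the first piece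
  have step4 : (∫⁻ r in Set.Ioo (0:ℝ) (max (R - v) 0), H r)
      = ∫⁻ u in Set.Ioo (0:ℝ) (max (R - v) 0),
          ENNReal.ofReal (2 * π * u) * (g u : ENNReal) := by
    refine setLIntegral_congr_fun_ae measurableSet_Ioo
      (Filter.Eventually.of_forall fun r hr => ?_)
    have hr0 : 0 < r := hr.1
    have hRv : 0 < R - v := by
      by_contra hc
      push_neg at hc
      rw [max_eq_right (by linarith)] at hr
      linarith [hr.1, hr.2]
    rw [max_eq_left hRv.le] at hr
    have harc : Real.arccos (h r) = π := by
      rw [Real.arccos_eq_pi, hh]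
      rw [div_le_iff₀ (by positivity)]
      nlinarith [hr.2]
    rw [hHdef]
    simp only [harc]
    rw [show (2:ℝ) * r * π = 2 * π * r by ring]
  rw [step1, step2, step3, step4]

/-- The distance from the origin of a point uniformly distributed on the disc
`b(z,R)` has density `χ⁽¹⁾(u,v) = 2u/R²` (times `πR²`, here stated unnormalized)
on `0 ≤ u ≤ R−v` and `χ⁽²⁾(u,v) = (2u/(πR²))·arccos((u²+v²−R²)/(2uv))` on
`|R−v| < u ≤ R+v`: for every measurable `g : ℝ → ℝ≥0`,
`∫_{b(z,R)} g(‖x‖) dx = ∫₀^{max(R−v,0)} 2πu·g(u) du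
  + ∫_{|R−v|}^{R+v} 2u·arccos((u²+v²−R²)/(2uv))·g(u) du`. -/
theorem matern_distance_density (R : ℝ) (hR : 0 < R) (z : EuclideanSpace ℝ (Fin 2))
    (v : ℝ) (hv : v = ‖z‖) (hv0 : 0 < v) (g : ℝ → NNReal) (hg : Measurable g) :
    (∫⁻ x in Metric.closedBall z R, (g ‖x‖ : ENNReal)) =
      (∫⁻ u in Set.Ioo (0:ℝ) (max (R - v) 0),
          ENNReal.ofReal (2 * π * u) * (g u : ENNReal)) +
      ∫⁻ u in Set.Ioo |R - v| (R + v),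
          ENNReal.ofReal (2 * u * Real.arccos ((u ^ 2 + v ^ 2 - R ^ 2) / (2 * u * v))) *
            (g u : ENNReal) := by
  set e : ℂ ≃ₗᵢ[ℝ] EuclideanSpace ℝ (Fin 2) := Complex.orthonormalBasisOneI.repr with he
  have hmp : MeasurePreserving e volume volume :=
    Complex.orthonormalBasisOneI.measurePreserving_repr
  have hemb : MeasurableEmbedding e := e.toHomeomorph.toMeasurableEquiv.measurableEmbedding
  set w : ℂ := e.symm z with hwdef
  have hwnorm : ‖w‖ = v := by rw [hwdef, LinearIsometryEquiv.norm_map e.symm z, ← hv]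
  have hpre : e ⁻¹' Metric.closedBall z R = Metric.closedBall w R := by
    ext y
    simp only [Set.mem_preimage, Metric.mem_closedBall]
    rw [dist_eq_norm, dist_eq_norm, ← e.norm_map (y - w), map_sub, hwdef,
      e.apply_symm_apply]
  have h1 : (∫⁻ x in Metric.closedBall z R, (g ‖x‖ : ENNReal))
      = ∫⁻ y in Metric.closedBall w R, (g ‖y‖ : ENNReal) := by
    rw [← hmp.setLIntegral_comp_preimage_emb hemb (fun x => (g ‖x‖ : ENNReal))
      (Metric.closedBall z R), hpre]
    refine setLIntegral_congr_fun_ae Metric.isClosed_closedBall.measurableSet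
      (Filter.Eventually.of_forall fun y _ => ?_)
    rw [e.norm_map]
  have hvC : ((v : ℂ)) ≠ 0 := Complex.ofReal_ne_zero.2 hv0.ne'
  set c : Circle := ⟨w / v, by
    show w / (v:ℂ) ∈ Metric.sphere (0:ℂ) 1
    rw [mem_sphere_zero_iff_norm, norm_div, hwnorm, Complex.norm_real, Real.norm_of_nonneg hv0.le,
      div_self hv0.ne']⟩ with hc
  set ρ : ℂ ≃ₗᵢ[ℝ] ℂ := rotation c with hρ
  have hρv : ρ ((v:ℂ)) = w := by
    rw [hρ, rotation_apply, hc]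
    show w / (v:ℂ) * (v:ℂ) = w
    exact div_mul_cancel₀ w hvC
  have hρpre : ρ ⁻¹' Metric.closedBall w R = Metric.closedBall ((v:ℂ)) R := by
    ext y
    simp only [Set.mem_preimage, Metric.mem_closedBall]
    rw [dist_eq_norm, dist_eq_norm, ← hρv, ← map_sub, ρ.norm_map]
  have h2 : (∫⁻ y in Metric.closedBall w R, (g ‖y‖ : ENNReal))
      = ∫⁻ y in Metric.closedBall ((v:ℂ)) R, (g ‖y‖ : ENNReal) := by
    rw [← (ρ.measurePreserving).setLIntegral_comp_preimage_emb
      (ρ.toHomeomorph.toMeasurableEquiv.measurableEmbedding) (fun x => (g ‖x‖ : ENNReal))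
      (Metric.closedBall w R), hρpre]
    refine setLIntegral_congr_fun_ae Metric.isClosed_closedBall.measurableSet
      (Filter.Eventually.of_forall fun y _ => ?_)
    rw [ρ.norm_map]
  rw [h1, h2, key_complex R hR v hv0 g hg]
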